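/- Under Assumption *, suppose (μ,Λ) is a spectral pair with 0 ∈ Λ, and let ν = ν_{>1}. With Γ_0 = {0, N_1/M_1, 2N_1/M_1, ..., (M_1−1)N_1/M_1}, Γ = [0, N_1/M_1) ∩ ℚ = {γ_0 = 0, γ_1, γ_2, ...}, Γ_k = γ_k + Γ_0, and P(γ) = {ω ∈ ℤ : γ + N_1ω ∈ Λ}: for any k ≠ j, any i_k ∈ Γ_k and any i_j ∈ Γ_j, the set (i_k/N_1 + P(i_k)) ∪ (i_j/N_1 + P(i_j)) is either empty or an orthogonal set of ν. -/

import Mathlib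

open MeasureTheory Filter Topology Complex Polynomial

/-- The exponential function `e_l(x) = e^{-2πi l x}`. -/
noncomputable def expFun (l x : ℝ) : ℂ :=
  Complex.exp (((-2 * Real.pi * l * x : ℝ) : ℂ) * Complex.I)

/-- The Fourier transform `μ̂(ξ) = ∫ e^{-2πiξx} dμ(x)` of a measure on `ℝ`. -/
noncomputable def ft (μ : Measure ℝ) (ξ : ℝ) : ℂ := ∫ x, expFun ξ x ∂μ

/-- `Λ` is an orthogonal (orthonormal) set for `μ`: the exponentials `e_λ`, `λ ∈ Λ`, form an
orthonormal family in `L²(μ)`. -/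
def IsOrthoSet (μ : Measure ℝ) (Λ : Set ℝ) : Prop :=
  ∀ l₁ ∈ Λ, ∀ l₂ ∈ Λ,
    (∫ x, (starRingEnd ℂ) (expFun l₁ x) * expFun l₂ x ∂μ) = if l₁ = l₂ then 1 else 0

/-- `(μ, Λ)` is a spectral pair: the exponentials `{e_λ : λ ∈ Λ}` form an orthonormal family
which is maximal (total) in `L²(μ)`, i.e. an orthonormal basis of `L²(μ)`. -/
def IsSpectralPair (μ : Measure ℝ) (Λ : Set ℝ) : Prop :=
  IsOrthoSet μ Λ ∧
  ∀ f : ℝ → ℂ, MemLp f 2 μ →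
    (∀ l ∈ Λ, (∫ x, (starRingEnd ℂ) (expFun l x) * f x ∂μ) = 0) → f =ᵐ[μ] 0

/-- `μ` is a spectral measure: some countable `Λ ⊆ ℝ` is a spectrum of `μ`. -/
def IsSpectralMeasure (μ : Measure ℝ) : Prop :=
  ∃ Λ : Set ℝ, Λ.Countable ∧ IsSpectralPair μ Λ

/-- The uniform probability measure `δ_A` on a finite set `A ⊆ ℝ`. -/
noncomputable def uniformD (A : Finset ℝ) : Measure ℝ :=
  (A.card : ENNReal)⁻¹ • ∑ a ∈ A, Measure.dirac a

/-- The measure `δ_{c⁻¹ B}` for a finite set `B ⊆ ℤ` and a scaling factor `c`. -/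
noncomputable def scaledB (B : Finset ℤ) (c : ℝ) : Measure ℝ :=
  uniformD (B.image fun b : ℤ => (b : ℝ) / c)

/-- The finite convolutions `μ_k = δ_{N₁⁻¹B₁} ∗ δ_{(N₁N₂)⁻¹B₂} ∗ ⋯ ∗ δ_{(N₁⋯N_k)⁻¹B_k}`
(the sequences are indexed starting from `k = 1`; `μ_0 = δ_0`). -/
noncomputable def partialConv (N : ℕ → ℕ) (B : ℕ → Finset ℤ) : ℕ → Measure ℝ
  | 0 => Measure.dirac 0
  | k + 1 =>
      MeasureTheory.Measure.conv (partialConv N B k)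
        (scaledB (B (k + 1)) (∏ i ∈ Finset.Icc 1 (k + 1), (N i : ℝ)))

/-- `μ` is the infinite convolution of `{(N_k, B_k)}_{k=1}^∞`: it is a Borel probability
measure and the finite convolutions `μ_k` converge weakly to `μ`. -/
def IsInfiniteConv (N : ℕ → ℕ) (B : ℕ → Finset ℤ) (μ : Measure ℝ) : Prop :=
  IsProbabilityMeasure μ ∧
    ∀ f : BoundedContinuousFunction ℝ ℝ,
      Tendsto (fun k => ∫ x, f x ∂(partialConv N B k)) atTop (𝓝 (∫ x, f x ∂μ))

/-- `ν` is the tail infinite convolution `ν_{>k} = δ_{N_{k+1}⁻¹B_{k+1}} ∗ ⋯`. -/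
def IsNuGt (N : ℕ → ℕ) (B : ℕ → Finset ℤ) (k : ℕ) (ν : Measure ℝ) : Prop :=
  IsInfiniteConv (fun j => N (k + j)) (fun j => B (k + j)) ν

/-- A family of measures is tight. -/
def IsTightFamily {ι : Type*} (Φ : ι → Measure ℝ) : Prop :=
  ∀ ε : ENNReal, 0 < ε → ∃ K : Set ℝ, IsCompact K ∧ ∀ i, 1 - ε < Φ i K

/-- `B` is a complete residue system modulo `M`: each residue class modulo `M` contains
exactly one element of `B`. -/
def IsCRS (B : Finset ℤ) (M : ℕ) : Prop :=
  ∀ r : ZMod M, ∃! b : ℤ, b ∈ B ∧ ((b : ZMod M) = r)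

/-- `∑_{b ∈ B} x^{b - b⁎}` where `b⁎ = min B`, i.e. `x^{-b⁎} ∑_{b ∈ B} x^b`. -/
noncomputable def numerPoly (B : Finset ℤ) : Polynomial ℤ :=
  ∑ b ∈ B, Polynomial.X ^ (b - (WithTop.untopD 0 B.min)).toNat

/-- `∑_{k=0}^{n-1} x^k`. -/
noncomputable def geomPoly (n : ℕ) : Polynomial ℤ :=
  ∑ k ∈ Finset.range n, Polynomial.X ^ k

/-- The character polynomial `f_B(x) = (∑_{b∈B} x^b)/(x^{b⁎} ∑_{k=0}^{#B-1} x^k)`,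
obtained by dividing by the monic polynomial `∑_{k=0}^{#B-1} x^k`. -/
noncomputable def charPoly (B : Finset ℤ) : Polynomial ℤ :=
  numerPoly B /ₘ geomPoly B.card

/-- `B` (a complete residue system modulo `M`) satisfies the uniform discrete zero
condition: `Z(f_B ∘ e^{-2πix}) ⊆ {j/M : j ∈ ℤ ∖ Mℤ}`. -/
def SatisfiesUDZ (B : Finset ℤ) (M : ℕ) : Prop :=
  {x : ℝ | Polynomial.aeval (expFun x 1) (charPoly B) = 0} ⊆
    {x : ℝ | ∃ j : ℤ, ¬ ((M : ℤ) ∣ j) ∧ x = (j : ℝ) / M}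

/-- `M_B(ξ) = (1/#B) ∑_{b∈B} e^{-2πibξ}`, the Fourier transform of `δ_B`. -/
noncomputable def MB (B : Finset ℤ) (ξ : ℝ) : ℂ :=
  (B.card : ℂ)⁻¹ * ∑ b ∈ B, expFun (b : ℝ) ξ

/-- `Q_{μ,Λ}(ξ) = ∑_{λ ∈ Λ} |μ̂(ξ+λ)|²`. -/
noncomputable def Qf (μ : Measure ℝ) (Λ : Set ℝ) (ξ : ℝ) : ℝ :=
  ∑' l : Λ, ‖ft μ (ξ + (l : ℝ))‖ ^ 2

/-- `P(γ) = {ω ∈ ℤ : γ + N₁ω ∈ Λ}`. -/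
def Pset (Λ : Set ℝ) (N1 γ : ℝ) : Set ℤ := {ω : ℤ | γ + N1 * (ω : ℝ) ∈ Λ}

/-- The translated set `γ/N₁ + P(γ)`, viewed as a subset of `ℝ`. -/
def PsetT (Λ : Set ℝ) (N1 γ : ℝ) : Set ℝ :=
  {x : ℝ | ∃ ω : ℤ, x = γ / N1 + (ω : ℝ) ∧ γ + N1 * (ω : ℝ) ∈ Λ}

/-- `Γ₀ = {0, N₁/M₁, 2N₁/M₁, …, (M₁-1)N₁/M₁}`. -/
def Gamma0 (N1 M1 : ℕ) : Set ℝ :=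
  {x : ℝ | ∃ t : ℕ, t < M1 ∧ x = (t : ℝ) * ((N1 : ℝ) / (M1 : ℝ))}

lemma continuous_expFun (l : ℝ) : Continuous (expFun l) := by
  unfold expFun; fun_prop

lemma norm_expFun (l x : ℝ) : ‖expFun l x‖ = 1 := by
  unfold expFun
  exact Complex.norm_exp_ofReal_mul_I (-2 * Real.pi * l * x)

lemma expFun_mul_eq {a x a' x' : ℝ} (h : a * x = a' * x') : expFun a x = expFun a' x' := by
  unfold expFun
  congr 2
  rw [mul_assoc, mul_assoc, h]
  push_cast
  ring

lemma expFun_add_arg (ξ x y : ℝ) : expFun ξ (x + y) = expFun ξ x * expFun ξ y := by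
  unfold expFun
  rw [← Complex.exp_add, ← add_mul, ← Complex.ofReal_add]
  ring_nf

lemma conj_mul_expFun (a b x : ℝ) :
    (starRingEnd ℂ) (expFun a x) * expFun b x = expFun (b - a) x := by
  unfold expFun
  rw [← Complex.exp_conj, ← Complex.exp_add]
  congr 1
  rw [map_mul, Complex.conj_I, Complex.conj_ofReal]
  push_cast
  ring

lemma integrable_expFun (μ : Measure ℝ) [IsFiniteMeasure μ] (ξ : ℝ) :
    Integrable (expFun ξ) μ := by
  refine Integrable.mono' (integrable_const (1:ℝ)) (continuous_expFun ξ).aestronglyMeasurable ?_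
  filter_upwards with x
  rw [norm_expFun]

instance instFinU (A : Finset ℝ) : IsFiniteMeasure (uniformD A) := by
  constructor
  rw [uniformD, Measure.smul_apply, Measure.coe_finset_sum, Finset.sum_apply]
  simp only [Measure.dirac_apply_of_mem (Set.mem_univ _), Finset.sum_const, nsmul_eq_mul, mul_one,
    smul_eq_mul]
  by_cases h : (A.card : ENNReal) = 0
  · simp [h]
  · rw [ENNReal.inv_mul_cancel h (by simp)]
    exact ENNReal.one_lt_top

lemma ft_uniformD (A : Finset ℝ) (ξ : ℝ) :
    ft (uniformD A) ξ = (A.card : ℂ)⁻¹ * ∑ a ∈ A, expFun ξ a := by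
  rw [ft, uniformD, integral_smul_measure,
    integral_finset_sum_measure (fun i _ => integrable_expFun _ ξ)]
  simp only [integral_dirac' _ _ (continuous_expFun ξ).stronglyMeasurable]
  rw [ENNReal.toReal_inv, ENNReal.toReal_natCast]
  rw [← Complex.ofReal_natCast, Complex.real_smul, Complex.ofReal_inv, Complex.ofReal_natCast]

lemma ft_scaledB (B : Finset ℤ) {c : ℝ} (hc : 0 < c) (ξ : ℝ) :
    ft (scaledB B c) ξ = MB B (ξ / c) := by
  have hinj : Set.InjOn (fun b : ℤ => (b : ℝ) / c) B := by
    intro a _ b _ h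
    have : (a : ℝ) = b := by
      field_simp at h; exact_mod_cast h
    exact_mod_cast this
  rw [scaledB, ft_uniformD, MB, Finset.card_image_of_injOn hinj, Finset.sum_image hinj]
  congr 1
  refine Finset.sum_congr rfl fun b _ => ?_
  refine expFun_mul_eq ?_
  field_simp

instance (B : Finset ℤ) (c : ℝ) : IsFiniteMeasure (scaledB B c) := instFinU _

lemma ft_conv (μ ν : Measure ℝ) [SFinite μ] [SFinite ν] (ξ : ℝ) :
    ft (μ.conv ν) ξ = ft μ ξ * ft ν ξ := by
  rw [ft, Measure.conv,
    integral_map (by fun_prop) (continuous_expFun ξ).aestronglyMeasurable]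
  rw [show (fun p : ℝ × ℝ => expFun ξ (p.1 + p.2))
      = fun p : ℝ × ℝ => expFun ξ p.1 * expFun ξ p.2 from funext fun p => expFun_add_arg ξ _ _]
  exact integral_prod_mul (fun x => expFun ξ x) (fun x => expFun ξ x)

lemma isFiniteMeasure_partialConv (N : ℕ → ℕ) (B : ℕ → Finset ℤ) :
    ∀ k, IsFiniteMeasure (partialConv N B k)
  | 0 => by rw [partialConv]; infer_instance
  | k + 1 => by
      rw [partialConv]
      have := isFiniteMeasure_partialConv N B k
      infer_instance

lemma prodN_pos (N : ℕ → ℕ) (hN : ∀ i, 1 ≤ i → 1 ≤ N i) (k : ℕ) :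
    0 < ∏ i ∈ Finset.Icc 1 k, (N i : ℝ) := by
  apply Finset.prod_pos
  intro i hi
  have := hN i (Finset.mem_Icc.mp hi).1
  positivity

lemma ft_partialConv (N : ℕ → ℕ) (hN : ∀ i, 1 ≤ i → 1 ≤ N i) (B : ℕ → Finset ℤ) (ξ : ℝ) :
    ∀ k, ft (partialConv N B k) ξ =
      ∏ i ∈ Finset.range k, MB (B (i + 1)) (ξ / ∏ j ∈ Finset.Icc 1 (i + 1), (N j : ℝ))
  | 0 => by
      rw [partialConv, ft, integral_dirac' _ _ (continuous_expFun ξ).stronglyMeasurable]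
      simp [expFun]
  | k + 1 => by
      have h1 := isFiniteMeasure_partialConv N B k
      rw [partialConv, ft_conv, ft_partialConv N hN B ξ k,
        ft_scaledB _ (prodN_pos N hN (k + 1)), Finset.prod_range_succ]

lemma prod_Icc_one {M : Type*} [CommMonoid M] (f : ℕ → M) :
    ∀ n, ∏ i ∈ Finset.Icc 1 n, f i = ∏ i ∈ Finset.range n, f (i + 1)
  | 0 => by simp
  | n + 1 => by
      rw [Finset.prod_Icc_succ_top (Nat.le_add_left 1 n), prod_Icc_one f n,
        Finset.prod_range_succ]

lemma ft_partial_succ (N : ℕ → ℕ) (hN : ∀ i, 1 ≤ i → 1 ≤ N i) (B : ℕ → Finset ℤ) (ξ : ℝ)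
    (k : ℕ) :
    ft (partialConv N B (k + 1)) ξ
      = MB (B 1) (ξ / N 1) *
        ft (partialConv (fun j => N (1 + j)) (fun j => B (1 + j)) k) (ξ / N 1) := by
  have hN' : ∀ i, 1 ≤ i → 1 ≤ N (1 + i) := fun i hi => hN (1 + i) (by omega)
  rw [ft_partialConv N hN B ξ (k + 1), ft_partialConv _ hN' _ _ k, Finset.prod_range_succ']
  have h0 : MB (B (0 + 1)) (ξ / ∏ j ∈ Finset.Icc 1 (0 + 1), (N j : ℝ)) = MB (B 1) (ξ / N 1) := by
    norm_num
  have hi : ∀ i ∈ Finset.range k,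
      MB (B (i + 1 + 1)) (ξ / ∏ j ∈ Finset.Icc 1 (i + 1 + 1), (N j : ℝ))
        = MB (B (1 + (i + 1))) (ξ / (N 1 : ℝ) / ∏ j ∈ Finset.Icc 1 (i + 1), (N (1 + j) : ℝ)) := by
    intro i _
    have hp : ∏ j ∈ Finset.Icc 1 (i + 1 + 1), (N j : ℝ)
        = (N 1 : ℝ) * ∏ j ∈ Finset.Icc 1 (i + 1), (N (1 + j) : ℝ) := by
      rw [prod_Icc_one, prod_Icc_one, Finset.prod_range_succ', mul_comm]
      congr 1
      exact Finset.prod_congr rfl fun j _ => by congr 2; omega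
    rw [hp, ← div_div]
    congr 2
    omega
  rw [Finset.prod_congr rfl hi, h0, mul_comm]

/-- `x ↦ cos (c * x)` as a bounded continuous function. -/
noncomputable def cosBCF (c : ℝ) : BoundedContinuousFunction ℝ ℝ :=
  BoundedContinuousFunction.ofNormedAddCommGroup (fun x => Real.cos (c * x)) (by fun_prop) 1
    (fun x => by rw [Real.norm_eq_abs]; exact Real.abs_cos_le_one _)

/-- `x ↦ sin (c * x)` as a bounded continuous function. -/
noncomputable def sinBCF (c : ℝ) : BoundedContinuousFunction ℝ ℝ :=
  BoundedContinuousFunction.ofNormedAddCommGroup (fun x => Real.sin (c * x)) (by fun_prop) 1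
    (fun x => by rw [Real.norm_eq_abs]; exact Real.abs_sin_le_one _)

lemma cosBCF_apply (c x : ℝ) : cosBCF c x = Real.cos (c * x) := rfl
lemma sinBCF_apply (c x : ℝ) : sinBCF c x = Real.sin (c * x) := rfl

lemma ft_eq_cos_sin (ρ : Measure ℝ) [IsFiniteMeasure ρ] (ξ : ℝ) :
    ft ρ ξ = ((∫ x, cosBCF (-2 * Real.pi * ξ) x ∂ρ : ℝ) : ℂ)
      + ((∫ x, sinBCF (-2 * Real.pi * ξ) x ∂ρ : ℝ) : ℂ) * Complex.I := by
  have hint1 : Integrable (fun x => ((cosBCF (-2 * Real.pi * ξ) x : ℝ) : ℂ)) ρ :=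
    ((cosBCF _).integrable ρ).ofReal
  have hint2 : Integrable (fun x => ((sinBCF (-2 * Real.pi * ξ) x : ℝ) : ℂ) * Complex.I) ρ :=
    (((sinBCF _).integrable ρ).ofReal).mul_const _
  have hfun : ∀ x, expFun ξ x
      = ((cosBCF (-2 * Real.pi * ξ) x : ℝ) : ℂ)
        + ((sinBCF (-2 * Real.pi * ξ) x : ℝ) : ℂ) * Complex.I := by
    intro x
    rw [expFun, Complex.exp_mul_I, cosBCF_apply, sinBCF_apply, Complex.ofReal_cos,
      Complex.ofReal_sin]
  rw [ft]
  simp only [hfun]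
  rw [integral_add hint1 hint2, integral_mul_const]
  congr 1
  · exact integral_ofReal
  · congr 1
    exact integral_ofReal

lemma tendsto_ft {N : ℕ → ℕ} {B : ℕ → Finset ℤ} {μ : Measure ℝ}
    (h : IsInfiniteConv N B μ) (ξ : ℝ) :
    Tendsto (fun m => ft (partialConv N B m) ξ) atTop (𝓝 (ft μ ξ)) := by
  have hprob := h.1
  have hfin : IsFiniteMeasure μ := inferInstance
  have hc := h.2 (cosBCF (-2 * Real.pi * ξ))
  have hs := h.2 (sinBCF (-2 * Real.pi * ξ))
  have key : ∀ m : ℕ, ft (partialConv N B m) ξ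
      = ((∫ x, cosBCF (-2 * Real.pi * ξ) x ∂(partialConv N B m) : ℝ) : ℂ)
        + ((∫ x, sinBCF (-2 * Real.pi * ξ) x ∂(partialConv N B m) : ℝ) : ℂ) * Complex.I :=
    fun m => by
      have := isFiniteMeasure_partialConv N B m
      exact ft_eq_cos_sin _ ξ
  rw [ft_eq_cos_sin μ ξ]
  simp only [key]
  exact (((Complex.continuous_ofReal.tendsto _).comp hc).add
    (((Complex.continuous_ofReal.tendsto _).comp hs).mul_const Complex.I))

lemma ft_mu_factor {N : ℕ → ℕ} {B : ℕ → Finset ℤ} {μ ν1 : Measure ℝ}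
    (hN : ∀ i, 1 ≤ i → 1 ≤ N i)
    (hμ : IsInfiniteConv N B μ) (hν : IsNuGt N B 1 ν1) (ξ : ℝ) :
    ft μ ξ = MB (B 1) (ξ / N 1) * ft ν1 (ξ / N 1) := by
  have h1 : Tendsto (fun m => ft (partialConv N B (m + 1)) ξ) atTop (𝓝 (ft μ ξ)) :=
    (tendsto_ft hμ ξ).comp (tendsto_add_atTop_nat 1)
  have h2 : Tendsto
      (fun m => MB (B 1) (ξ / N 1) *
        ft (partialConv (fun j => N (1 + j)) (fun j => B (1 + j)) m) (ξ / N 1)) atTop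
      (𝓝 (MB (B 1) (ξ / N 1) * ft ν1 (ξ / N 1))) :=
    (tendsto_ft hν (ξ / N 1)).const_mul _
  rw [show (fun m => ft (partialConv N B (m + 1)) ξ)
      = fun m => MB (B 1) (ξ / N 1) *
          ft (partialConv (fun j => N (1 + j)) (fun j => B (1 + j)) m) (ξ / N 1)
    from funext fun m => ft_partial_succ N hN B ξ m] at h1
  exact tendsto_nhds_unique h1 h2

lemma card_CRS {B : Finset ℤ} {M : ℕ} (hM : 2 ≤ M) (h : IsCRS B M) : B.card = M := by
  have : NeZero M := ⟨by omega⟩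
  have hcb : B.card = (Finset.univ : Finset (ZMod M)).card := by
    refine Finset.card_bij (fun b _ => ((b : ZMod M))) ?_ ?_ ?_
    · intros; exact Finset.mem_univ _
    · intro a ha b hb hab
      obtain ⟨x, hx, hu⟩ := h (a : ZMod M)
      exact (hu a ⟨ha, rfl⟩).trans (hu b ⟨hb, hab.symm⟩).symm
    · intro r _
      obtain ⟨b, ⟨hb, hbr⟩, _⟩ := h r
      exact ⟨b, hb, hbr⟩
  rw [hcb, Finset.card_univ, ZMod.card]

lemma nonempty_CRS {B : Finset ℤ} {M : ℕ} (hM : 2 ≤ M) (h : IsCRS B M) : B.Nonempty := by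
  obtain ⟨b, ⟨hb, _⟩, _⟩ := h 0
  exact ⟨b, hb⟩

lemma min_le_CRS {B : Finset ℤ} (hne : B.Nonempty) {b : ℤ} (hb : b ∈ B) :
    WithTop.untopD 0 B.min ≤ b := by
  rw [← Finset.coe_min' hne, WithTop.untopD_coe]
  exact Finset.min'_le B b hb

lemma geom_dvd_numer {B : Finset ℤ} {M : ℕ} (hM : 2 ≤ M) (h : IsCRS B M) :
    geomPoly M ∣ numerPoly B := by
  have : NeZero M := ⟨by omega⟩
  have hne : B.Nonempty := nonempty_CRS hM h
  have hcast : ∀ b ∈ B, (((b - WithTop.untopD 0 B.min).toNat % M : ℕ) : ZMod M)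
      = ((b : ZMod M) - ((WithTop.untopD 0 B.min : ℤ) : ZMod M)) := by
    intro b hb
    have h1 : (((b - WithTop.untopD 0 B.min).toNat : ℤ) : ZMod M) = ((b - WithTop.untopD 0 B.min : ℤ) : ZMod M) := by
      rw [Int.toNat_of_nonneg (sub_nonneg.mpr (min_le_CRS hne hb))]
    rw [ZMod.natCast_mod]
    push_cast at h1 ⊢
    rw [h1]
  have hgeom : geomPoly M = ∑ b ∈ B, (Polynomial.X : Polynomial ℤ) ^ ((b - WithTop.untopD 0 B.min).toNat % M) := by
    rw [geomPoly]
    refine (Finset.sum_bij (fun b (_ : b ∈ B) => (b - WithTop.untopD 0 B.min).toNat % M) ?_ ?_ ?_ ?_).symm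
    · intro b hb
      exact Finset.mem_range.mpr (Nat.mod_lt _ (by omega))
    · intro a ha b hb hab
      have heq : ((a : ZMod M)) = (b : ZMod M) := by
        have := (hcast a ha).symm.trans ((congrArg (fun n : ℕ => ((n : ZMod M))) hab).trans
          (hcast b hb))
        simpa [sub_left_inj] using this
      obtain ⟨x, hx, hu⟩ := h (a : ZMod M)
      exact (hu a ⟨ha, rfl⟩).trans (hu b ⟨hb, heq.symm⟩).symm
    · intro r hr
      obtain ⟨b, ⟨hb, hbr⟩, _⟩ := h ((r : ZMod M) + ((WithTop.untopD 0 B.min : ℤ) : ZMod M))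
      refine ⟨b, hb, ?_⟩
      have heq : (((b - WithTop.untopD 0 B.min).toNat % M : ℕ) : ZMod M) = ((r : ℕ) : ZMod M) := by
        rw [hcast b hb, hbr]; ring
      have h2 : (b - WithTop.untopD 0 B.min).toNat % M % M = r % M :=
        (ZMod.natCast_eq_natCast_iff' _ _ _).mp heq
      have hrlt : r < M := Finset.mem_range.mp hr
      rw [Nat.mod_mod_of_dvd _ dvd_rfl, Nat.mod_eq_of_lt hrlt] at h2
      exact h2
    · intros; rfl
  have hdvd : ((Polynomial.X : Polynomial ℤ) ^ M - 1) ∣ (numerPoly B - geomPoly M) := by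
    rw [numerPoly, hgeom, ← Finset.sum_sub_distrib]
    apply Finset.dvd_sum
    intro b hb
    have key : (Polynomial.X : Polynomial ℤ) ^ ((b - WithTop.untopD 0 B.min).toNat)
          - Polynomial.X ^ ((b - WithTop.untopD 0 B.min).toNat % M)
        = Polynomial.X ^ ((b - WithTop.untopD 0 B.min).toNat % M) *
            (((Polynomial.X : Polynomial ℤ) ^ M) ^ ((b - WithTop.untopD 0 B.min).toNat / M) - 1) := by
      rw [mul_sub, mul_one, ← pow_mul, ← pow_add]
      congr 2
      exact (Nat.mod_add_div _ _).symm
    rw [key]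
    have hd : ((Polynomial.X : Polynomial ℤ) ^ M - 1) ∣
        (((Polynomial.X : Polynomial ℤ) ^ M) ^ ((b - WithTop.untopD 0 B.min).toNat / M) - 1) := by
      simpa using sub_dvd_pow_sub_pow ((Polynomial.X : Polynomial ℤ) ^ M) 1
        ((b - WithTop.untopD 0 B.min).toNat / M)
    exact hd.mul_left _
  have hgd : geomPoly M ∣ ((Polynomial.X : Polynomial ℤ) ^ M - 1) :=
    ⟨Polynomial.X - 1, (geom_sum_mul (Polynomial.X : Polynomial ℤ) M).symm⟩
  have h3 := hgd.trans hdvd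
  have h2 : geomPoly M ∣ (numerPoly B - geomPoly M) + geomPoly M := (h3.add (dvd_refl _))
  rwa [sub_add_cancel] at h2

lemma expFun_int (b : ℤ) (ξ : ℝ) : expFun (b : ℝ) ξ = (expFun ξ 1) ^ b := by
  unfold expFun
  rw [← Complex.exp_int_mul]
  congr 1
  push_cast
  ring

lemma MB_zero {B : Finset ℤ} {M : ℕ} (hM : 2 ≤ M) (hCRS : IsCRS B M) (hUDZ : SatisfiesUDZ B M)
    {ξ : ℝ} (h : MB B ξ = 0) : ∃ j : ℤ, ¬ ((M : ℤ) ∣ j) ∧ ξ = (j : ℝ) / M := by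
  have hne : B.Nonempty := nonempty_CRS hM hCRS
  set z : ℂ := expFun ξ 1 with hz
  have hz0 : z ≠ 0 := Complex.exp_ne_zero _
  have hcard : B.card = M := card_CRS hM hCRS
  -- from MB = 0 get sum of powers zero
  have hsum : ∑ b ∈ B, z ^ b = 0 := by
    rw [MB] at h
    rcases mul_eq_zero.mp h with h1 | h1
    · exfalso
      rw [inv_eq_zero] at h1
      have : (B.card : ℂ) ≠ 0 := by
        rw [hcard]; exact_mod_cast (by positivity : (0:ℝ) < (M:ℝ)) |>.ne'
      exact this h1
    · rw [← h1]
      exact (Finset.sum_congr rfl fun b _ => expFun_int b ξ).symm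
  have hnum : Polynomial.aeval z (numerPoly B) = 0 := by
    have hfac : ∑ b ∈ B, z ^ b = z ^ (WithTop.untopD 0 B.min) * Polynomial.aeval z (numerPoly B) := by
      rw [numerPoly, map_sum, Finset.mul_sum]
      refine Finset.sum_congr rfl fun b hb => ?_
      rw [Polynomial.aeval_X_pow]
      rw [← zpow_natCast z, Int.toNat_of_nonneg (sub_nonneg.mpr (min_le_CRS hne hb)),
        ← zpow_add₀ hz0]
      congr 1
      ring
    rw [hfac] at hsum
    rcases mul_eq_zero.mp hsum with h1 | h1
    · exact absurd h1 (zpow_ne_zero _ hz0)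
    · exact h1
  have hmonic : (geomPoly M).Monic := by
    rw [geomPoly]
    exact Polynomial.monic_geom_sum_X (by omega)
  have hfactored : Polynomial.aeval z (geomPoly M) * Polynomial.aeval z (charPoly B) = 0 := by
    rw [← map_mul]
    have hdvd := geom_dvd_numer hM hCRS
    have hmod : numerPoly B %ₘ geomPoly M = 0 :=
      (Polynomial.modByMonic_eq_zero_iff_dvd hmonic).mpr hdvd
    have heq : geomPoly M * (numerPoly B /ₘ geomPoly M) = numerPoly B := by
      have := Polynomial.modByMonic_add_div (numerPoly B) (geomPoly M)
      rw [hmod, zero_add] at this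
      exact this
    rw [charPoly, hcard, heq]
    exact hnum
  rcases mul_eq_zero.mp hfactored with hgz | hcz
  · -- geometric factor vanishes: z^M = 1, z ≠ 1
    have hgs : ∑ k ∈ Finset.range M, z ^ k = 0 := by
      rw [geomPoly, map_sum] at hgz
      simpa using hgz
    have hzM : z ^ M = 1 := by
      have := geom_sum_mul z M
      rw [hgs, zero_mul] at this
      have h2 : z ^ M - 1 = 0 := this.symm
      linear_combination h2
    have hz1 : z ≠ 1 := by
      intro hz1
      rw [hz1] at hgs
      simp at hgs
      omega
    -- z^M = exp(M * (-2πξ) I) = 1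
    have hexp : Complex.exp (((M * (-2 * Real.pi * ξ) : ℝ) : ℂ) * Complex.I) = 1 := by
      rw [← hzM, hz]
      unfold expFun
      rw [← Complex.exp_nat_mul]
      congr 1
      push_cast
      ring
    obtain ⟨n, hn⟩ := Complex.exp_eq_one_iff.mp hexp
    have hreal : (M : ℝ) * (-2 * Real.pi * ξ) = (n : ℝ) * (2 * Real.pi) := by
      have : ((M * (-2 * Real.pi * ξ) : ℝ) : ℂ) * Complex.I
          = (((n : ℝ) * (2 * Real.pi) : ℝ) : ℂ) * Complex.I := by
        rw [hn]; push_cast; ring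
      have h2 := mul_right_cancel₀ Complex.I_ne_zero this
      exact_mod_cast h2
    have hMpos : (0:ℝ) < M := by positivity
    have hπ : Real.pi ≠ 0 := Real.pi_ne_zero
    have hξ : ξ = ((-n : ℤ) : ℝ) / M := by
      have h3 : (2 * Real.pi) * ((M : ℝ) * ξ + n) = 0 := by nlinarith [hreal]
      have h4 : (M : ℝ) * ξ + n = 0 := by
        rcases mul_eq_zero.mp h3 with h | h
        · exact absurd h (by positivity)
        · exact h
      push_cast
      field_simp
      linarith
    refine ⟨-n, ?_, hξ⟩
    intro hdvd
    obtain ⟨c, hc⟩ := hdvd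
    apply hz1
    rw [hz]
    unfold expFun
    have hξc : ξ = (c : ℝ) := by
      rw [hξ, hc]
      push_cast
      field_simp
    rw [hξc]
    have : ((-2 * Real.pi * (c:ℝ) * 1 : ℝ) : ℂ) * Complex.I = (-c : ℤ) * (2 * Real.pi * Complex.I) := by
      push_cast; ring
    rw [this, Complex.exp_int_mul_two_pi_mul_I]
  · -- char factor vanishes: use UDZ
    exact hUDZ hcz

lemma no_mixed (N1 M1 : ℕ) (hN1 : 0 < (N1 : ℝ)) (hM1 : 0 < (M1 : ℝ))
    {a b : ℝ} (ha0 : 0 ≤ a) (ha : a < (N1 : ℝ) / M1) (hb0 : 0 ≤ b) (hb : b < (N1 : ℝ) / M1)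
    (t s : ℕ) (ω₁ ω₂ jj : ℤ)
    (heq : (b + (s : ℝ) * ((N1 : ℝ) / M1)) / N1 + (ω₂ : ℝ)
      - ((a + (t : ℝ) * ((N1 : ℝ) / M1)) / N1 + (ω₁ : ℝ)) = (jj : ℝ) / M1) :
    a = b := by
  have hN1' : (N1 : ℝ) ≠ 0 := ne_of_gt hN1
  have hM1' : (M1 : ℝ) ≠ 0 := ne_of_gt hM1
  set m : ℤ := jj + M1 * ω₁ - M1 * ω₂ + t - s with hm
  have hba : b - a = (m : ℝ) * ((N1 : ℝ) / M1) := by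
    field_simp at heq ⊢
    push_cast [hm]
    nlinarith [heq]
  have hq : (0:ℝ) < (N1 : ℝ) / M1 := by positivity
  have habs : |(m : ℝ)| < 1 := by
    have h1 : |b - a| < (N1 : ℝ) / M1 := abs_lt.mpr ⟨by linarith, by linarith⟩
    rw [hba, abs_mul, abs_of_pos hq] at h1
    by_contra hc
    push_neg at hc
    nlinarith
  have hm0 : m = 0 := by
    have h1 : |m| < 1 := by exact_mod_cast (by push_cast; exact habs : ((|m| : ℤ) : ℝ) < 1)
    exact Int.abs_lt_one_iff.mp h1
  rw [hm0] at hba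
  simp at hba
  linarith

theorem stmt14
    (N M : ℕ → ℕ) (B : ℕ → Finset ℤ) (μ : Measure ℝ) (ν : ℕ → Measure ℝ)
    (hM : ∀ k ≥ 1, 2 ≤ M k) (hMN : ∀ k ≥ 1, M k ≤ N k)
    (hCRS : ∀ k ≥ 1, IsCRS (B k) (M k))
    (hUDZ : ∀ k ≥ 1, SatisfiesUDZ (B k) (M k))
    (hμ : IsInfiniteConv N B μ)
    (hν : ∀ k ≥ 1, IsNuGt N B k (ν k))
    (htight : IsTightFamily fun k => ν (k + 1))
    (Λ : Set ℝ) (hΛ : IsSpectralPair μ Λ) (h0 : (0 : ℝ) ∈ Λ)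
    (g : ℕ → ℝ) (hg0 : g 0 = 0) (hginj : Function.Injective g)
    (hgrange : Set.range g =
      {x : ℝ | (∃ q : ℚ, x = (q : ℝ)) ∧ 0 ≤ x ∧ x < (N 1 : ℝ) / (M 1 : ℝ)}) :
    ∀ k j : ℕ, k ≠ j →
      ∀ ik, (∃ y ∈ Gamma0 (N 1) (M 1), ik = g k + y) →
      ∀ ij, (∃ y ∈ Gamma0 (N 1) (M 1), ij = g j + y) →
        PsetT Λ (N 1) ik ∪ PsetT Λ (N 1) ij = ∅ ∨
          IsOrthoSet (ν 1) (PsetT Λ (N 1) ik ∪ PsetT Λ (N 1) ij) := by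
  intro k j hkj ik hik' ij hij'
  obtain ⟨yk, hyk, hik⟩ := hik'
  obtain ⟨yj, hyj, hij⟩ := hij'
  obtain ⟨t, ht, hykv⟩ := hyk
  obtain ⟨s, hs, hyjv⟩ := hyj
  right
  have hM1 : 2 ≤ M 1 := hM 1 le_rfl
  have hN1 : 2 ≤ N 1 := le_trans hM1 (hMN 1 le_rfl)
  have hN1R : (0:ℝ) < (N 1 : ℝ) := by exact_mod_cast (by omega : 0 < N 1)
  have hM1R : (0:ℝ) < (M 1 : ℝ) := by exact_mod_cast (by omega : 0 < M 1)
  have hN : ∀ i, 1 ≤ i → 1 ≤ N i := fun i hi => by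
    have h1 := hM i hi; have h2 := hMN i hi; omega
  have hprob : IsProbabilityMeasure (ν 1) := (hν 1 le_rfl).1
  have hfact : ∀ ξ : ℝ, ft μ ξ = MB (B 1) (ξ / N 1) * ft (ν 1) (ξ / N 1) :=
    fun ξ => ft_mu_factor hN hμ (hν 1 le_rfl) ξ
  have hgmem : ∀ i : ℕ, 0 ≤ g i ∧ g i < (N 1 : ℝ) / M 1 := by
    intro i
    have hm : g i ∈ Set.range g := Set.mem_range_self i
    rw [hgrange] at hm
    exact ⟨hm.2.1, hm.2.2⟩
  intro l₁ hl₁ l₂ hl₂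
  by_cases he : l₁ = l₂
  · rw [if_pos he, he]
    have hone : ∀ x : ℝ, (starRingEnd ℂ) (expFun l₂ x) * expFun l₂ x = 1 := by
      intro x
      rw [conj_mul_expFun]
      simp [expFun]
    simp only [hone]
    simp
  · rw [if_neg he]
    have get : ∀ l, l ∈ PsetT Λ (N 1) ik ∪ PsetT Λ (N 1) ij →
        ∃ γ : ℝ, ∃ ω : ℤ, (γ = ik ∨ γ = ij) ∧ l = γ / N 1 + (ω : ℝ) ∧
          γ + (N 1 : ℝ) * (ω : ℝ) ∈ Λ := by
      intro l hl
      rcases hl with h | h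
      · obtain ⟨ω, h1, h2⟩ := h; exact ⟨ik, ω, Or.inl rfl, h1, h2⟩
      · obtain ⟨ω, h1, h2⟩ := h; exact ⟨ij, ω, Or.inr rfl, h1, h2⟩
    obtain ⟨γ₁, ω₁, hc₁, hl₁e, hlam1⟩ := get l₁ hl₁
    obtain ⟨γ₂, ω₂, hc₂, hl₂e, hlam2⟩ := get l₂ hl₂
    have hN1ne : (N 1 : ℝ) ≠ 0 := ne_of_gt hN1R
    have hl1lam : l₁ = (γ₁ + (N 1 : ℝ) * ω₁) / N 1 := by rw [hl₁e]; field_simp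
    have hl2lam : l₂ = (γ₂ + (N 1 : ℝ) * ω₂) / N 1 := by rw [hl₂e]; field_simp
    have hlamne : (γ₁ + (N 1 : ℝ) * ω₁) ≠ (γ₂ + (N 1 : ℝ) * ω₂) := by
      intro hcontra
      exact he (by rw [hl1lam, hl2lam, hcontra])
    have horth := hΛ.1 _ hlam1 _ hlam2
    rw [if_neg hlamne] at horth
    simp only [conj_mul_expFun] at horth
    have hftμ : ft μ ((γ₂ + (N 1 : ℝ) * ω₂) - (γ₁ + (N 1 : ℝ) * ω₁)) = 0 := horth
    have hkey := hfact ((γ₂ + (N 1 : ℝ) * ω₂) - (γ₁ + (N 1 : ℝ) * ω₁))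
    have hdiv : ((γ₂ + (N 1 : ℝ) * ω₂) - (γ₁ + (N 1 : ℝ) * ω₁)) / (N 1 : ℝ) = l₂ - l₁ := by
      rw [hl1lam, hl2lam]; ring
    rw [hdiv, hftμ] at hkey
    have hMBne : MB (B 1) (l₂ - l₁) ≠ 0 := by
      intro hMB0
      obtain ⟨jj, hjj, hjeq⟩ := MB_zero hM1 (hCRS 1 le_rfl) (hUDZ 1 le_rfl) hMB0
      rw [hl₂e, hl₁e] at hjeq
      rcases hc₁ with hc₁ | hc₁ <;> rcases hc₂ with hc₂ | hc₂
      · rw [hc₁, hc₂] at hjeq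
        apply hjj
        refine ⟨ω₂ - ω₁, ?_⟩
        have hx : (jj : ℝ) = (M 1 : ℝ) * ((ω₂ : ℝ) - ω₁) := by
          have h5 : (jj : ℝ) / M 1 = (ω₂ : ℝ) - ω₁ := by linarith [hjeq]
          field_simp at h5
          linarith
        exact_mod_cast hx
      · rw [hc₁, hc₂, hik, hij, hykv, hyjv] at hjeq
        have hgg := no_mixed (N 1) (M 1) hN1R hM1R (hgmem k).1 (hgmem k).2 (hgmem j).1
          (hgmem j).2 t s ω₁ ω₂ jj (by linarith [hjeq])
        exact hkj (hginj hgg)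
      · rw [hc₁, hc₂, hik, hij, hykv, hyjv] at hjeq
        have hgg := no_mixed (N 1) (M 1) hN1R hM1R (hgmem j).1 (hgmem j).2 (hgmem k).1
          (hgmem k).2 s t ω₁ ω₂ jj (by linarith [hjeq])
        exact hkj (hginj hgg.symm)
      · rw [hc₁, hc₂] at hjeq
        apply hjj
        refine ⟨ω₂ - ω₁, ?_⟩
        have hx : (jj : ℝ) = (M 1 : ℝ) * ((ω₂ : ℝ) - ω₁) := by
          have h5 : (jj : ℝ) / M 1 = (ω₂ : ℝ) - ω₁ := by linarith [hjeq]
          field_simp at h5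
          linarith
        exact_mod_cast hx
    have hft0 : ft (ν 1) (l₂ - l₁) = 0 := by
      rcases mul_eq_zero.mp hkey.symm with h | h
      · exact absurd h hMBne
      · exact h
    simp only [conj_mul_expFun]
    exact hft0
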